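/- arXiv:2107.03539 — 2 statements merged into one kernel-verified Lean document; each statement's English description precedes it below -/
import Mathlib

section
/- (Choquet topological lemma) Let X be a second countable Hausdorff topological space and let {u_ι}_{ι ∈ I} be an arbitrary family of functions from X to the extended real line [-∞, +∞]. For a subset J ⊆ I, set u^J(x) = sup_{ι ∈ J} u_ι(x). Then there exists a countable subset J ⊆ I such that (u^J)* = (u^I)*, where for a function v : X → [-∞, +∞] its upper semicontinuous regularization is defined by v*(x) = limsup_{y → x} v(y). -/
open Filter Topology

lemma exists_countable_iSup_eq_ereal {I : Type*} (f : I → EReal) :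
    ∃ T : Set I, T.Countable ∧ (⨆ ι ∈ T, f ι) = ⨆ ι, f ι := by
  rcases isEmpty_or_nonempty I with h | h
  · exact ⟨∅, Set.countable_empty, by simp⟩
  · obtain ⟨v, -, htend, hmem⟩ := exists_seq_tendsto_sSup (S := Set.range f)
      (Set.range_nonempty f) (OrderTop.bddAbove _)
    choose g hg using fun n => hmem n
    refine ⟨Set.range g, Set.countable_range g, le_antisymm ?_ ?_⟩
    · exact iSup₂_le fun ι _ => le_iSup f ι
    · rw [← sSup_range]
      refine le_of_tendsto' htend fun n => ?_
      rw [← hg n]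
      exact le_iSup₂ (f := fun ι (_ : ι ∈ Set.range g) => f ι) (g n) ⟨n, rfl⟩

/-- **Choquet's topological lemma.** Let `X` be a second countable Hausdorff space and
`{u_ι}_{ι ∈ I}` a family of functions `X → [-∞, +∞]`. Then there is a countable subset
`J ⊆ I` such that the upper semicontinuous regularizations of `u^J = sup_{ι ∈ J} u_ι` and
of `u^I = sup_{ι ∈ I} u_ι` coincide, where `v*(x) = limsup_{y → x} v(y)`. -/
theorem choquet_topological_lemma
    {X : Type*} [TopologicalSpace X] [T2Space X] [SecondCountableTopology X]
    {I : Type*} (u : I → X → EReal) :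
    ∃ J : Set I, J.Countable ∧
      ∀ x : X,
        limsup (fun y => ⨆ ι ∈ J, u ι y) (𝓝 x) = limsup (fun y => ⨆ ι, u ι y) (𝓝 x) := by
  classical
  set B := TopologicalSpace.countableBasis X
  have hBc : B.Countable := TopologicalSpace.countable_countableBasis X
  -- for each basic open set U, pick countable T U ⊆ I realizing the sup over U
  have key : ∀ U : Set X, ∃ T : Set I, T.Countable ∧
      (⨆ ι ∈ T, ⨆ y ∈ U, u ι y) = ⨆ ι, ⨆ y ∈ U, u ι y :=
    fun U => exists_countable_iSup_eq_ereal fun ι => ⨆ y ∈ U, u ι y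
  choose T hTc hT using key
  refine ⟨⋃ U ∈ B, T U, hBc.biUnion fun U _ => hTc U, fun x => ?_⟩
  set J : Set I := ⋃ U ∈ B, T U with hJ
  have hb : (𝓝 x).HasBasis (fun U : Set X => U ∈ B ∧ x ∈ U) id :=
    (TopologicalSpace.isBasis_countableBasis X).nhds_hasBasis
  rw [hb.limsup_eq_iInf_iSup, hb.limsup_eq_iInf_iSup]
  refine le_antisymm ?_ ?_
  · refine iInf_mono fun U => iInf_mono fun _ => iSup₂_mono fun y _ => ?_
    exact iSup₂_le fun ι _ => le_iSup (fun ι => u ι y) ι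
  · refine le_iInf₂ fun U hU => ?_
    refine le_trans (iInf₂_le U hU) ?_
    -- suffices: sup over U of u^I ≤ sup over U of u^J
    have h1 : (⨆ y ∈ (id U : Set X), ⨆ ι, u ι y) = ⨆ ι, ⨆ y ∈ U, u ι y := by
      simp only [id]
      exact (iSup_congr fun y => iSup_comm).trans iSup_comm
    have h2 : (⨆ ι ∈ T U, ⨆ y ∈ U, u ι y) ≤ ⨆ y ∈ (id U : Set X), ⨆ ι ∈ J, u ι y := by
      refine iSup₂_le fun ι hι => iSup₂_le fun y hy => ?_
      have hιJ : ι ∈ J := Set.mem_biUnion hU.1 hι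
      exact le_trans (le_iSup₂ (f := fun ι (_ : ι ∈ J) => u ι y) ι hιJ)
        (le_iSup₂ (f := fun y (_ : y ∈ (id U : Set X)) => ⨆ ι ∈ J, u ι y) y hy)
    calc (⨆ y ∈ (id U : Set X), ⨆ ι, u ι y) = ⨆ ι, ⨆ y ∈ U, u ι y := h1
      _ = ⨆ ι ∈ T U, ⨆ y ∈ U, u ι y := (hT U).symm
      _ ≤ ⨆ y ∈ (id U : Set X), ⨆ ι ∈ J, u ι y := h2
end

section
/- Let X be a Hausdorff topological space and let F be a family of upper semicontinuous functions from X to [-∞, +∞) that is closed under subtracting positive real constants (i.e., if u ∈ F and ε > 0 then u - ε ∈ F). For a subset A ⊆ X define Q_A(x) = sup{ u(x) : u ∈ F, u ≤ 0 on A } (with the convention that the supremum over the empty family is -∞). If E_1 ⊇ E_2 ⊇ E_3 ⊇ ... is a decreasing sequence of nonempty compact subsets of X and E = ⋂_{n} E_n, then for every x ∈ X the sequence Q_{E_n}(x) is nondecreasing and Q_E(x) = lim_{n → ∞} Q_{E_n}(x). -/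
open Filter Topology

/-- The upper envelope `Q_A(x) = sup { u(x) : u ∈ F, u ≤ 0 on A }` associated to a family `F`
of extended-real-valued functions and a subset `A`; the supremum over the empty family
is `-∞` (`⊥` in `EReal`). -/
noncomputable def extremalSup {X : Type*} (F : Set (X → EReal)) (A : Set X) (x : X) : EReal :=
  ⨆ u ∈ {u ∈ F | ∀ a ∈ A, u a ≤ 0}, u x

/-- Let `X` be Hausdorff and `F` a family of upper semicontinuous functions `X → [-∞, +∞)`
closed under subtracting positive real constants. If `E 1 ⊇ E 2 ⊇ ...` is a decreasing
sequence of nonempty compact subsets of `X` with intersection `E`, then for every `x` the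
sequence `n ↦ Q_{E n}(x)` is nondecreasing and converges to `Q_E(x)`. -/
theorem extremalSup_tendsto_of_antitone_compact
    {X : Type*} [TopologicalSpace X] [T2Space X]
    (F : Set (X → EReal))
    (husc : ∀ u ∈ F, UpperSemicontinuous u)
    (hlt_top : ∀ u ∈ F, ∀ x : X, u x < ⊤)
    (hsub : ∀ u ∈ F, ∀ ε : ℝ, 0 < ε → (fun x => u x - (ε : EReal)) ∈ F)
    (E : ℕ → Set X) (hE : Antitone E)
    (hne : ∀ n, (E n).Nonempty) (hcompact : ∀ n, IsCompact (E n))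
    (x : X) :
    Monotone (fun n => extremalSup F (E n) x) ∧
      Tendsto (fun n => extremalSup F (E n) x) atTop (𝓝 (extremalSup F (⋂ n, E n) x)) := by
  set Q : Set X → EReal := fun A => extremalSup F A x with hQ
  have hmono : ∀ {A B : Set X}, B ⊆ A → Q A ≤ Q B := by
    intro A B hBA
    refine iSup_le fun u => iSup_le fun hu => ?_
    exact le_iSup_of_le u (le_iSup_of_le ⟨hu.1, fun a ha => hu.2 a (hBA ha)⟩ le_rfl)
  have hmonoSeq : Monotone fun n => extremalSup F (E n) x := fun m n hmn =>
    hmono (hE hmn)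
  refine ⟨hmonoSeq, ?_⟩
  have htendsto : Tendsto (fun n => extremalSup F (E n) x) atTop
      (𝓝 (⨆ n, extremalSup F (E n) x)) := tendsto_atTop_iSup hmonoSeq
  have hkey : (⨆ n, extremalSup F (E n) x) = extremalSup F (⋂ n, E n) x := by
    refine le_antisymm (iSup_le fun n => hmono (Set.iInter_subset E n)) ?_
    -- Q_E ≤ sup_n Q_{E n}
    refine iSup_le fun u => iSup_le fun hu => ?_
    obtain ⟨huF, hu0⟩ := hu
    -- it suffices to show u x - ε ≤ sup for every ε > 0
    rw [← EReal.ge_of_forall_gt_iff_ge]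
    intro z hz
    have hxt : u x ≠ ⊤ := (hlt_top u huF x).ne
    obtain ⟨r, hzr, hru⟩ := EReal.exists_between_coe_real hz
    set ε : ℝ := r - z with hε
    have hεpos : 0 < ε := by
      have : z < r := by exact_mod_cast hzr
      simp only [hε]; linarith
    -- the open set where u < ε contains ⋂ E n
    set U : Set X := {y | u y < (ε : EReal)} with hU
    have hUopen : IsOpen U := (husc u huF).isOpen_preimage (ε : EReal)
    have hEU : (⋂ n, E n) ⊆ U := fun y hy =>
      lt_of_le_of_lt (hu0 y hy) (by exact_mod_cast hεpos)
    -- by compactness, some E n ⊆ U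
    have : ∃ n, E 0 ∩ (E n ∩ Uᶜ) = ∅ := by
      refine (hcompact 0).elim_directed_family_closed (fun n => E n ∩ Uᶜ)
        (fun n => IsClosed.inter ((hcompact n).isClosed) hUopen.isClosed_compl) ?_ ?_
      · rw [← Set.iInter_inter, Set.eq_empty_iff_forall_notMem]
        rintro y ⟨-, hy2, hy3⟩
        exact hy3 (hEU hy2)
      · intro m n
        exact ⟨max m n, Set.inter_subset_inter_left _ (hE (le_max_left m n)),
          Set.inter_subset_inter_left _ (hE (le_max_right m n))⟩
    obtain ⟨n, hn⟩ := this
    have hEnU : E n ⊆ U := by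
      intro y hy
      by_contra hyU
      exact Set.eq_empty_iff_forall_notMem.1 hn y ⟨hE (Nat.zero_le n) hy, hy, hyU⟩
    -- u - ε is admissible for E n
    have hmem : (fun y => u y - (ε : EReal)) ∈ {v ∈ F | ∀ a ∈ E n, v a ≤ 0} := by
      refine ⟨hsub u huF ε hεpos, fun a ha => ?_⟩
      have h1 := (hEnU ha : u a < (ε : EReal))
      rw [EReal.sub_le_iff_le_add (Or.inl (EReal.coe_ne_bot ε)) (Or.inl (EReal.coe_ne_top ε))]
      simpa using h1.le
    have hle : u x - (ε : EReal) ≤ extremalSup F (E n) x :=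
      le_iSup_of_le (fun y => u y - (ε : EReal)) (le_iSup_of_le hmem le_rfl)
    have hzle : (z : EReal) ≤ u x - (ε : EReal) := by
      rw [EReal.le_sub_iff_add_le (Or.inl (EReal.coe_ne_bot ε)) (Or.inl (EReal.coe_ne_top ε))]
      have : ((z + ε : ℝ) : EReal) = (r : EReal) := by norm_cast; simp [hε]
      calc (z : EReal) + (ε : EReal) = ((z + ε : ℝ) : EReal) := by norm_cast
        _ = (r : EReal) := this
        _ ≤ u x := hru.le
    calc (z : EReal) ≤ u x - (ε : EReal) := hzle
      _ ≤ extremalSup F (E n) x := hle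
      _ ≤ ⨆ n, extremalSup F (E n) x := le_iSup (fun n => extremalSup F (E n) x) n
  rw [← hkey]
  exact htendsto
end
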